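/- Let G be a finite simple connected König-Egerváry graph with at least two vertices. Then α(G) > |V(G)|/2 if and only if |core(G)| > |N(core(G))| ≥ 1, where N(core(G)) denotes the set of all vertices adjacent to some vertex of core(G). -/

import Mathlib

/-- A set of vertices is independent if no two of its vertices are adjacent. -/
def IsIndep {V : Type*} (G : SimpleGraph V) (s : Set V) : Prop :=
  ∀ u ∈ s, ∀ w ∈ s, ¬ G.Adj u w

open Classical in
/-- The independence number `α(G)`: the maximum cardinality of an independent set. -/
noncomputable def indepNum {V : Type*} (G : SimpleGraph V) [Fintype V] : ℕ :=
  Nat.findGreatest (fun n => ∃ s : Set V, IsIndep G s ∧ s.ncard = n) (Fintype.card V)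

/-- A matching: a set of edges of `G` that are pairwise vertex-disjoint. -/
def IsMatchingSet {V : Type*} (G : SimpleGraph V) (M : Finset (Sym2 V)) : Prop :=
  (↑M : Set (Sym2 V)) ⊆ G.edgeSet ∧
    ∀ e ∈ M, ∀ f ∈ M, e ≠ f → ∀ x : V, ¬(x ∈ e ∧ x ∈ f)

open Classical in
/-- The matching number `μ(G)`: the maximum cardinality of a matching. -/
noncomputable def matchNum {V : Type*} (G : SimpleGraph V) [Fintype V] : ℕ :=
  Nat.findGreatest (fun n => ∃ M : Finset (Sym2 V), IsMatchingSet G M ∧ M.card = n)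
    (Fintype.card V)

/-- A maximum independent set: an independent set of cardinality `α(G)`. -/
def IsMaxIndep {V : Type*} (G : SimpleGraph V) [Fintype V] (s : Set V) : Prop :=
  IsIndep G s ∧ s.ncard = indepNum G

/-- `core(G)`: the intersection of all maximum independent sets of `G`. -/
def core {V : Type*} (G : SimpleGraph V) [Fintype V] : Set V :=
  {v : V | ∀ s : Set V, IsMaxIndep G s → v ∈ s}

/-- `G` is a König-Egerváry graph if `α(G) + μ(G) = |V(G)|`. -/
def IsKonigEgervary {V : Type*} (G : SimpleGraph V) [Fintype V] : Prop :=
  indepNum G + matchNum G = Fintype.card V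

/-- `G - v`: the subgraph of `G` induced on `V \ {v}`. -/
def deleteVert {V : Type*} (G : SimpleGraph V) (v : V) : SimpleGraph {u : V // u ≠ v} :=
  SimpleGraph.comap Subtype.val G

/-- A perfect matching: a matching covering all vertices of `G`. -/
def HasPerfectMatching {V : Type*} (G : SimpleGraph V) : Prop :=
  ∃ M : Finset (Sym2 V), IsMatchingSet G M ∧ ∀ v : V, ∃ e ∈ M, v ∈ e

/-- `N(A)`: the set of all vertices adjacent to some vertex of `A`. -/
def nbhd {V : Type*} (G : SimpleGraph V) (A : Set V) : Set V :=
  {w : V | ∃ u ∈ A, G.Adj u w}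

set_option linter.unusedSectionVars false
section Aux
variable {V : Type*} [Fintype V] {G : SimpleGraph V}

lemma mem_out_iff (e : Sym2 V) (x : V) :
    x ∈ e ↔ x = (Quot.out e).1 ∨ x = (Quot.out e).2 := by
  conv_lhs => rw [← e.out_eq]
  exact Sym2.mem_iff

lemma adj_out {e : Sym2 V} (he : e ∈ G.edgeSet) :
    G.Adj (Quot.out e).1 (Quot.out e).2 := by
  rw [← e.out_eq] at he
  exact he

lemma out_ne {e : Sym2 V} (he : e ∈ G.edgeSet) :
    (Quot.out e).1 ≠ (Quot.out e).2 := (adj_out he).ne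

lemma ncard_le_cardV (s : Set V) : s.ncard ≤ Fintype.card V := by
  simpa [Set.ncard_univ, Nat.card_eq_fintype_card] using
    Set.ncard_le_ncard (Set.subset_univ s) Set.finite_univ

lemma indep_ncard_le {s : Set V} (hs : IsIndep G s) : s.ncard ≤ indepNum G := by
  classical
  exact Nat.le_findGreatest (ncard_le_cardV s) ⟨s, hs, rfl⟩

lemma exists_maxIndep (G : SimpleGraph V) : ∃ s : Set V, IsMaxIndep G s := by
  classical
  have h0 : ∃ s : Set V, IsIndep G s ∧ s.ncard = 0 :=
    ⟨∅, fun u hu => absurd hu (Set.notMem_empty u), by simp⟩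
  obtain ⟨s, h1, h2⟩ := Nat.findGreatest_spec
    (P := fun n => ∃ s : Set V, IsIndep G s ∧ s.ncard = n) (Nat.zero_le _) h0
  exact ⟨s, h1, h2⟩

lemma matching_card_le_cardV {M : Finset (Sym2 V)} (hM : IsMatchingSet G M) :
    M.card ≤ Fintype.card V := by
  classical
  have hinj : Set.InjOn (fun e : Sym2 V => (Quot.out e).1) M := by
    intro e he f hf hef
    by_contra hne
    have h1 : (Quot.out e).1 = (Quot.out f).1 := hef
    exact hM.2 e he f hf hne (Quot.out e).1
      ⟨Sym2.out_fst_mem e, by rw [h1]; exact Sym2.out_fst_mem f⟩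
  calc M.card ≤ Finset.univ.card :=
        Finset.card_le_card_of_injOn _ (fun _ _ => Finset.mem_univ _) hinj
    _ = Fintype.card V := Finset.card_univ

lemma matching_card_le {M : Finset (Sym2 V)} (hM : IsMatchingSet G M) :
    M.card ≤ matchNum G := by
  classical
  exact Nat.le_findGreatest (matching_card_le_cardV hM) ⟨M, hM, rfl⟩

lemma exists_maxMatching (G : SimpleGraph V) :
    ∃ M : Finset (Sym2 V), IsMatchingSet G M ∧ M.card = matchNum G := by
  classical
  have h0 : ∃ M : Finset (Sym2 V), IsMatchingSet G M ∧ M.card = 0 :=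
    ⟨∅, ⟨by simp, by simp⟩, by simp⟩
  exact Nat.findGreatest_spec
    (P := fun n => ∃ M : Finset (Sym2 V), IsMatchingSet G M ∧ M.card = n) (Nat.zero_le _) h0

end Aux

set_option linter.unusedSectionVars false
section Aux2
variable {V : Type*} [Fintype V] {G : SimpleGraph V}

/-- In a König–Egerváry graph, any maximum matching covers the complement of any
maximum independent set, and each matching edge has an endpoint in the set. -/
lemma matching_structure (hKE : IsKonigEgervary G)
    {M : Finset (Sym2 V)} (hM : IsMatchingSet G M) (hMc : M.card = matchNum G)
    {s : Set V} (hs : IsMaxIndep G s) :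
    (∀ v, v ∉ s → ∃ e ∈ M, v ∈ e) ∧ (∀ e ∈ M, ∃ x, x ∈ e ∧ x ∈ s) := by
  classical
  set f : Sym2 V → V := fun e =>
    if (Quot.out e).1 ∈ s then (Quot.out e).2 else (Quot.out e).1 with hf
  have hfe : ∀ e ∈ M, f e ∈ e := by
    intro e he
    by_cases h : (Quot.out e).1 ∈ s
    · simp only [hf, if_pos h]; exact Sym2.out_snd_mem e
    · simp only [hf, if_neg h]; exact Sym2.out_fst_mem e
  have hfns : ∀ e ∈ M, f e ∉ s := by
    intro e he
    have hadj : G.Adj (Quot.out e).1 (Quot.out e).2 := adj_out (hM.1 he)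
    by_cases h : (Quot.out e).1 ∈ s
    · simp only [hf, if_pos h]
      intro h2
      exact hs.1 _ h _ h2 hadj
    · simp only [hf, if_neg h]; exact h
  have hinj : Set.InjOn f M := by
    intro e he g hg hef
    by_contra hne
    exact hM.2 e he g hg hne (f e) ⟨hfe e he, by rw [hef]; exact hfe g hg⟩
  -- cardinalities
  have hscompl : (sᶜ : Set V).toFinset.card = Fintype.card V - indepNum G := by
    have h1 := Set.ncard_add_ncard_compl s
    rw [Nat.card_eq_fintype_card, hs.2] at h1
    rw [← Set.ncard_eq_toFinset_card']
    omega
  have hMcard : M.card = Fintype.card V - indepNum G := by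
    have := hKE
    unfold IsKonigEgervary at this
    have hle : indepNum G ≤ Fintype.card V := by omega
    omega
  have hsub : M.image f ⊆ (sᶜ : Set V).toFinset := by
    intro x hx
    obtain ⟨e, he, rfl⟩ := Finset.mem_image.mp hx
    simp only [Set.mem_toFinset, Set.mem_compl_iff]
    exact hfns e he
  have hcardim : (M.image f).card = M.card := Finset.card_image_of_injOn hinj
  have heq : M.image f = (sᶜ : Set V).toFinset := by
    apply Finset.eq_of_subset_of_card_le hsub
    rw [hcardim, hMcard, hscompl]
  constructor
  · intro v hv
    have hvmem : v ∈ (sᶜ : Set V).toFinset := by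
      simp only [Set.mem_toFinset, Set.mem_compl_iff]; exact hv
    rw [← heq] at hvmem
    obtain ⟨e, he, hfev⟩ := Finset.mem_image.mp hvmem
    exact ⟨e, he, hfev ▸ hfe e he⟩
  · intro e he
    by_contra hno
    push_neg at hno
    have h1 : (Quot.out e).1 ∉ s := hno _ (Sym2.out_fst_mem e)
    have h2 : (Quot.out e).2 ∉ s := hno _ (Sym2.out_snd_mem e)
    have huniq : ∀ x, x ∉ s → x ∈ e → f e = x := by
      intro x hxs hxe
      have hxmem : x ∈ (sᶜ : Set V).toFinset := by
        simp only [Set.mem_toFinset, Set.mem_compl_iff]; exact hxs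
      rw [← heq] at hxmem
      obtain ⟨e', he', hfe'⟩ := Finset.mem_image.mp hxmem
      have : e' = e := by
        by_contra hne
        exact hM.2 e' he' e he hne x ⟨hfe' ▸ hfe e' he', hxe⟩
      rw [← this]; exact hfe'
    have ha := huniq _ h1 (Sym2.out_fst_mem e)
    have hb := huniq _ h2 (Sym2.out_snd_mem e)
    exact out_ne (hM.1 he) (ha ▸ hb ▸ rfl)

end Aux2

set_option linter.unusedSectionVars false
section Aux3
variable {V : Type*} [Fintype V] {G : SimpleGraph V}

open Classical in
/-- The mate of a covered vertex in a matching. -/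
noncomputable def mateFun (M : Finset (Sym2 V)) (v : V) : V :=
  if h : ∃ e ∈ M, v ∈ e then
    (if v = (Quot.out h.choose).1 then (Quot.out h.choose).2 else (Quot.out h.choose).1)
  else v

lemma edge_uniq {M : Finset (Sym2 V)} (hM : IsMatchingSet G M) {e f : Sym2 V} {x : V}
    (he : e ∈ M) (hf : f ∈ M) (hxe : x ∈ e) (hxf : x ∈ f) : e = f := by
  by_contra hne
  exact hM.2 e he f hf hne x ⟨hxe, hxf⟩

lemma mate_spec {M : Finset (Sym2 V)} (hM : IsMatchingSet G M) {v : V}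
    (hv : ∃ e ∈ M, v ∈ e) :
    ∃ e ∈ M, v ∈ e ∧ mateFun M v ∈ e ∧ G.Adj v (mateFun M v) := by
  classical
  obtain ⟨he, hve⟩ := hv.choose_spec
  set e := hv.choose with hedef
  have hadj : G.Adj (Quot.out e).1 (Quot.out e).2 := adj_out (hM.1 he)
  have hmate : mateFun M v =
      (if v = (Quot.out e).1 then (Quot.out e).2 else (Quot.out e).1) := by
    rw [mateFun, dif_pos hv]
  refine ⟨e, he, hve, ?_, ?_⟩
  · rw [hmate]
    by_cases h : v = (Quot.out e).1
    · simp only [if_pos h]; exact Sym2.out_snd_mem e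
    · simp only [if_neg h]; exact Sym2.out_fst_mem e
  · rw [hmate]
    by_cases h : v = (Quot.out e).1
    · simp only [if_pos h]; rw [h]; exact hadj
    · simp only [if_neg h]
      have : v = (Quot.out e).2 := ((mem_out_iff e v).mp hve).resolve_left h
      rw [this]; exact hadj.symm

lemma mate_uniq {M : Finset (Sym2 V)} (hM : IsMatchingSet G M) {v x : V} {e : Sym2 V}
    (he : e ∈ M) (hve : v ∈ e) (hxe : x ∈ e) (hxv : x ≠ v) : x = mateFun M v := by
  classical
  have hv : ∃ e ∈ M, v ∈ e := ⟨e, he, hve⟩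
  obtain ⟨e', he', hve', hme', hadj⟩ := mate_spec hM hv
  have hee' : e = e' := edge_uniq hM he he' hve hve'
  subst hee'
  have hmne : mateFun M v ≠ v := hadj.ne'
  rcases (mem_out_iff e v).mp hve with h1 | h1
  · have hx : x = (Quot.out e).2 :=
      ((mem_out_iff e x).mp hxe).resolve_left (by rw [h1] at hxv; exact hxv)
    have hm : mateFun M v = (Quot.out e).2 :=
      ((mem_out_iff e _).mp hme').resolve_left (fun hh => hmne (hh.trans h1.symm))
    rw [hx, hm]
  · have hx : x = (Quot.out e).1 :=
      ((mem_out_iff e x).mp hxe).resolve_right (by rw [h1] at hxv; exact hxv)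
    have hm : mateFun M v = (Quot.out e).1 :=
      ((mem_out_iff e _).mp hme').resolve_right (fun hh => hmne (hh.trans h1.symm))
    rw [hx, hm]

lemma mate_injOn {M : Finset (Sym2 V)} (hM : IsMatchingSet G M) {s : Set V}
    (hcov : ∀ v ∈ s, ∃ e ∈ M, v ∈ e) : Set.InjOn (mateFun M) s := by
  intro v hv w hw hvw
  by_contra hne
  obtain ⟨e, he, hve, hme, hadjv⟩ := mate_spec hM (hcov v hv)
  obtain ⟨f, hf, hwf, hmf, hadjw⟩ := mate_spec hM (hcov w hw)
  have hef : e = f := edge_uniq hM he hf hme (hvw ▸ hmf)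
  subst hef
  have : w = mateFun M v := mate_uniq hM he hve hwf (Ne.symm hne)
  rw [hvw] at this
  exact hadjw.ne' this.symm

/-- The set of covered vertices of a matching has size `2 * M.card`. -/
lemma covered_ncard {M : Finset (Sym2 V)} (hM : IsMatchingSet G M) :
    ({v : V | ∃ e ∈ M, v ∈ e}).ncard = 2 * M.card := by
  classical
  rw [Set.ncard_eq_toFinset_card']
  have hrw : ({v : V | ∃ e ∈ M, v ∈ e}).toFinset =
      M.biUnion (fun e => {(Quot.out e).1, (Quot.out e).2}) := by
    ext v
    simp only [Set.mem_toFinset, Set.mem_setOf_eq, Finset.mem_biUnion,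
      Finset.mem_insert, Finset.mem_singleton]
    constructor
    · rintro ⟨e, he, hve⟩
      exact ⟨e, he, (mem_out_iff e v).mp hve⟩
    · rintro ⟨e, he, hve⟩
      exact ⟨e, he, (mem_out_iff e v).mpr hve⟩
  rw [hrw, Finset.card_biUnion]
  · have : ∀ e ∈ M, ({(Quot.out e).1, (Quot.out e).2} : Finset V).card = 2 := by
      intro e he
      rw [Finset.card_insert_of_notMem (by simpa using out_ne (hM.1 he)),
        Finset.card_singleton]
    rw [Finset.sum_congr rfl this, Finset.sum_const, smul_eq_mul, mul_comm]
  · intro e he f hf hne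
    rw [Function.onFun, Finset.disjoint_left]
    intro x hx hx2
    simp only [Finset.mem_insert, Finset.mem_singleton] at hx hx2
    exact hM.2 e he f hf hne x ⟨(mem_out_iff e x).mpr hx, (mem_out_iff f x).mpr hx2⟩

end Aux3

theorem stmt_10 {V : Type*} [Fintype V] (G : SimpleGraph V)
    (hKE : IsKonigEgervary G) (hConn : G.Connected) (hCard : 2 ≤ Fintype.card V) :
    2 * indepNum G > Fintype.card V ↔
      (core G).ncard > (nbhd G (core G)).ncard ∧ 1 ≤ (nbhd G (core G)).ncard := by
  classical
  obtain ⟨M, hM, hMc⟩ := exists_maxMatching G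
  have hcov : ({v : V | ∃ e ∈ M, v ∈ e}).ncard = 2 * matchNum G := by
    rw [covered_ncard hM, hMc]
  have hKE' : indepNum G + matchNum G = Fintype.card V := hKE
  constructor
  · intro h2a
    have hcovlt : ({v : V | ∃ e ∈ M, v ∈ e}).ncard < Fintype.card V := by
      rw [hcov]; omega
    have hex : ∃ u : V, ¬ ∃ e ∈ M, u ∈ e := by
      by_contra hall
      push_neg at hall
      have huniv : ({v : V | ∃ e ∈ M, v ∈ e}) = Set.univ := by
        ext v
        simpa using hall v
      rw [huniv, Set.ncard_univ, Nat.card_eq_fintype_card] at hcovlt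
      omega
    obtain ⟨u₀, hu₀⟩ := hex
    have hu₀core : u₀ ∈ core G := by
      intro s hs
      by_contra hns
      exact hu₀ ((matching_structure hKE hM hMc hs).1 u₀ hns)
    have hNne : 1 ≤ (nbhd G (core G)).ncard := by
      obtain ⟨v, hv⟩ := Fintype.exists_ne_of_one_lt_card (by omega) u₀
      obtain ⟨w⟩ := hConn.preconnected u₀ v
      have hadj : ∃ x, G.Adj u₀ x := by
        cases w with
        | nil => exact absurd rfl hv
        | cons h p => exact ⟨_, h⟩
      obtain ⟨x, hx⟩ := hadj
      exact (Set.ncard_pos).mpr ⟨x, u₀, hu₀core, hx⟩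
    refine ⟨?_, hNne⟩
    have hNnotin : ∀ w ∈ nbhd G (core G), ∀ s : Set V, IsMaxIndep G s → w ∉ s := by
      intro w hw s hs hws
      obtain ⟨u, hu, hadj⟩ := hw
      exact hs.1 u (hu s hs) w hws hadj
    have hNcov : ∀ w ∈ nbhd G (core G), ∃ e ∈ M, w ∈ e := by
      intro w hw
      obtain ⟨s, hs⟩ := exists_maxIndep G
      exact (matching_structure hKE hM hMc hs).1 w (hNnotin w hw s hs)
    have hmatecore : ∀ w ∈ nbhd G (core G), mateFun M w ∈ core G \ {u₀} := by
      intro w hw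
      obtain ⟨e, he, hwe, hme, hadj⟩ := mate_spec hM (hNcov w hw)
      constructor
      · intro s hs
        obtain ⟨x, hxe, hxs⟩ := (matching_structure hKE hM hMc hs).2 e he
        have hxw : x ≠ w := fun h => hNnotin w hw s hs (h ▸ hxs)
        rw [← mate_uniq hM he hwe hxe hxw]
        exact hxs
      · simp only [Set.mem_singleton_iff]
        intro h
        exact hu₀ ⟨e, he, h ▸ hme⟩
    have hinj : Set.InjOn (mateFun M) (nbhd G (core G)) := mate_injOn hM hNcov
    have h1 : (nbhd G (core G)).ncard ≤ (core G \ {u₀}).ncard :=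
      Set.ncard_le_ncard_of_injOn _ hmatecore hinj (Set.toFinite _)
    have h2 : (core G \ {u₀}).ncard < (core G).ncard :=
      Set.ncard_diff_singleton_lt_of_mem hu₀core (Set.toFinite _)
    omega
  · rintro ⟨hgt, -⟩
    by_contra hle
    push_neg at hle
    have h2m : 2 * matchNum G ≤ Fintype.card V := by
      rw [← hcov]; exact ncard_le_cardV _
    have hallcov : ∀ v : V, ∃ e ∈ M, v ∈ e := by
      have huniv : ({v : V | ∃ e ∈ M, v ∈ e}) = Set.univ := by
        apply Set.eq_of_subset_of_ncard_le (Set.subset_univ _) _ Set.finite_univ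
        rw [hcov, Set.ncard_univ, Nat.card_eq_fintype_card]
        omega
      intro v
      have : v ∈ ({v : V | ∃ e ∈ M, v ∈ e}) := huniv ▸ Set.mem_univ v
      exact this
    have hcoreinj : Set.InjOn (mateFun M) (core G) :=
      mate_injOn hM (fun v _ => hallcov v)
    have hmapsto : ∀ u ∈ core G, mateFun M u ∈ nbhd G (core G) := by
      intro u hu
      obtain ⟨e, he, hue, hme, hadj⟩ := mate_spec hM (hallcov u)
      exact ⟨u, hu, hadj⟩
    have hfin : (core G).ncard ≤ (nbhd G (core G)).ncard :=
      Set.ncard_le_ncard_of_injOn _ hmapsto hcoreinj (Set.toFinite _)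
    omega
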